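/- For every set partition word p, the number of applications of φ_{aba} needed to sort p is at most N(p), and this bound is tight: for each n ≥ 3 there exists p with N(p) = n requiring exactly n applications, namely p = (a_1 ⋯ a_n)^2. -/

import Mathlib

/-- West's stack-sorting map, implemented with an explicit stack (top = head). -/
def sWestAux : List ℕ → List ℕ → List ℕ
  | [], st => st
  | x :: xs, [] => sWestAux xs [x]
  | x :: xs, t :: st =>
      if t < x then t :: sWestAux (x :: xs) st
      else sWestAux xs (x :: t :: st)
termination_by l st => 2 * l.length + st.length

def sWest (l : List ℕ) : List ℕ := sWestAux l []

/-- A word contains a subsequence equivalent to `aba`. -/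
def HasABA (l : List ℕ) : Prop :=
  ∃ i j k : Fin l.length, i < j ∧ j < k ∧ l.get i = l.get k ∧ l.get j ≠ l.get i

instance (l : List ℕ) : Decidable (HasABA l) := by
  unfold HasABA; infer_instance

/-- Xia's stack-sorting map φ_{aba}, with explicit stack (top = head). -/
def phiAux : List ℕ → List ℕ → List ℕ
  | [], st => st
  | x :: xs, [] => phiAux xs [x]
  | x :: xs, t :: st =>
      if HasABA (x :: t :: st) then t :: phiAux (x :: xs) st
      else phiAux xs (x :: t :: st)
termination_by l st => 2 * l.length + st.length

def phi (p : List ℕ) : List ℕ := phiAux p []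

/-- A set partition word is sorted: all occurrences of each letter are consecutive. -/
def SortedWord (p : List ℕ) : Prop :=
  ∀ i j k : Fin p.length, i < j → j < k → p.get i = p.get k → p.get j = p.get i

/-- Number of distinct letters. -/
def Nletters (p : List ℕ) : ℕ := p.toFinset.card

def Avoids231 (l : List ℕ) : Prop :=
  ¬ ∃ i j k : Fin l.length, i < j ∧ j < k ∧ l.get k < l.get i ∧ l.get i < l.get j


open List

lemma pat_sublist {l : List ℕ} (i j k : Fin l.length) (h1 : i < j) (h2 : j < k) :
    [l.get i, l.get j, l.get k] <+ l := by
  have := List.map_getElem_sublist (l := l) (is := [i, j, k]) ?_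
  · simpa [List.get_eq_getElem] using this
  · simp only [List.pairwise_cons, List.mem_cons, List.mem_singleton]
    refine ⟨?_, ?_, ?_, .nil⟩
    · rintro j' (rfl | rfl | h) <;> first
        | exact h1 | exact h1.trans h2 | cases h
    · rintro k' (rfl | h) <;> first | exact h2 | cases h
    · rintro k' h; cases h

lemma sublist_pat {a b c : ℕ} {l : List ℕ} (h : [a, b, c] <+ l) :
    ∃ i j k : Fin l.length, i < j ∧ j < k ∧ l.get i = a ∧ l.get j = b ∧ l.get k = c := by
  rw [List.sublist_iff_exists_fin_orderEmbedding_get_eq] at h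
  obtain ⟨f, hf⟩ := h
  refine ⟨f ⟨0, by simp⟩, f ⟨1, by simp⟩, f ⟨2, by simp⟩, ?_, ?_, ?_, ?_, ?_⟩
  · exact f.strictMono (by simp [Fin.lt_def])
  · exact f.strictMono (by simp [Fin.lt_def])
  · exact (hf ⟨0, by simp⟩).symm
  · exact (hf ⟨1, by simp⟩).symm
  · exact (hf ⟨2, by simp⟩).symm

lemma hasABA_iff {l : List ℕ} : HasABA l ↔ ∃ a b : ℕ, b ≠ a ∧ [a, b, a] <+ l := by
  constructor
  · rintro ⟨i, j, k, h1, h2, h3, h4⟩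
    refine ⟨l.get i, l.get j, h4, ?_⟩
    have := pat_sublist i j k h1 h2
    rwa [show l.get k = l.get i from h3.symm] at this
  · rintro ⟨a, b, hb, h⟩
    obtain ⟨i, j, k, h1, h2, ha, hbb, hc⟩ := sublist_pat h
    exact ⟨i, j, k, h1, h2, by rw [ha, hc], by rw [ha, hbb]; exact hb⟩

lemma sortedWord_iff {l : List ℕ} : SortedWord l ↔ ¬ HasABA l := by
  rw [hasABA_iff]
  constructor
  · rintro hs ⟨a, b, hb, h⟩
    obtain ⟨i, j, k, h1, h2, ha, hbb, hc⟩ := sublist_pat h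
    exact hb (by rw [← hbb, ← ha]; exact hs i j k h1 h2 (ha.trans hc.symm))
  · intro h i j k h1 h2 h3
    by_contra hne
    refine h ⟨l.get i, l.get j, hne, ?_⟩
    have := pat_sublist i j k h1 h2
    rwa [show l.get k = l.get i from h3.symm] at this

lemma hasABA_sublist {l l' : List ℕ} (h : l <+ l') (hl : HasABA l) : HasABA l' := by
  rw [hasABA_iff] at *
  obtain ⟨a, b, hb, hs⟩ := hl
  exact ⟨a, b, hb, hs.trans h⟩

lemma hasABA_reverse {l : List ℕ} : HasABA l.reverse ↔ HasABA l := by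
  have key : ∀ m : List ℕ, HasABA m → HasABA m.reverse := by
    intro m hm
    rw [hasABA_iff] at *
    obtain ⟨a, b, hb, hs⟩ := hm
    exact ⟨a, b, hb, by simpa using hs.reverse⟩
  constructor
  · intro h; simpa using key _ h
  · exact key l

lemma hasABA_single {a : ℕ} {l : List ℕ} (h : ∀ x ∈ l, x = a) : ¬ HasABA l := by
  rw [hasABA_iff]
  rintro ⟨c, b, hb, hs⟩
  have hc : c = a := h c (hs.subset (by simp))
  have hbm : b = a := h b (hs.subset (by simp))
  exact hb (hbm.trans hc.symm)

lemma pat_decomp {a b : ℕ} {l₁ l₂ : List ℕ} (h : [a, b, a] <+ l₁ ++ l₂) :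
    [a, b, a] <+ l₂ ∨ (a ∈ l₁ ∧ a ∈ l₂) ∨ (a ∈ l₁ ∧ b ∈ l₁ ∧ a ∈ l₂) ∨ [a, b, a] <+ l₁ := by
  rw [List.sublist_append_iff] at h
  obtain ⟨s₁, s₂, heq, hs₁, hs₂⟩ := h
  match s₁, heq with
  | [], heq => left; rw [show s₂ = [a,b,a] from heq.symm] at hs₂; exact hs₂
  | [x], heq =>
    obtain ⟨rfl, h2⟩ := by simpa using heq
    right; left
    exact ⟨hs₁.subset (by simp), hs₂.subset (by rw [← h2]; simp)⟩
  | [x, y], heq =>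
    obtain ⟨rfl, rfl, h3⟩ := by simpa using heq
    right; right; left
    exact ⟨hs₁.subset (by simp), hs₁.subset (by simp), hs₂.subset (by rw [← h3]; simp)⟩
  | [x, y, z], heq =>
    obtain ⟨rfl, rfl, rfl, h4⟩ := by simpa using heq
    right; right; right; exact hs₁
  | x :: y :: z :: w :: s, heq =>
    exact absurd (congrArg List.length heq) (by simp)

lemma noABA_append_disjoint {l₁ l₂ : List ℕ} (h₁ : ¬ HasABA l₁) (h₂ : ¬ HasABA l₂)
    (hd : l₁.Disjoint l₂) : ¬ HasABA (l₁ ++ l₂) := by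
  rw [hasABA_iff]
  rintro ⟨a, b, hb, hs⟩
  rcases pat_decomp hs with h | ⟨h1, h2⟩ | ⟨h1, _, h3⟩ | h
  · exact h₂ (hasABA_iff.2 ⟨a, b, hb, h⟩)
  · exact hd h1 h2
  · exact hd h1 h3
  · exact h₁ (hasABA_iff.2 ⟨a, b, hb, h⟩)

lemma phiAux_nil (st : List ℕ) : phiAux [] st = st := by rw [phiAux]

lemma phiAux_emp (x : ℕ) (xs : List ℕ) : phiAux (x :: xs) [] = phiAux xs [x] := by rw [phiAux]

lemma phiAux_pop {x t : ℕ} {st : List ℕ} (xs : List ℕ) (h : HasABA (x :: t :: st)) :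
    phiAux (x :: xs) (t :: st) = t :: phiAux (x :: xs) st := by rw [phiAux]; simp [h]

lemma phiAux_push {x t : ℕ} {st : List ℕ} (xs : List ℕ) (h : ¬ HasABA (x :: t :: st)) :
    phiAux (x :: xs) (t :: st) = phiAux xs (x :: t :: st) := by rw [phiAux]; simp [h]

lemma phiAux_perm : ∀ (inp st : List ℕ), phiAux inp st ~ inp ++ st := by
  intro inp st
  induction inp, st using phiAux.induct with
  | case1 st => simp [phiAux_nil]
  | case2 x xs ih => rw [phiAux_emp]; exact ih.trans (by simp)
  | case3 x xs t st h ih =>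
    rw [phiAux_pop xs h]
    refine (ih.cons t).trans ?_
    calc t :: (x :: xs ++ st) ~ x :: xs ++ t :: st := by
          simpa using (List.perm_middle (a := t) (l₁ := x :: xs) (l₂ := st)).symm
  | case4 x xs t st h ih =>
    rw [phiAux_push xs h]
    refine ih.trans ?_
    simpa using (List.perm_middle (a := x) (l₁ := xs) (l₂ := t :: st)).symm

lemma hasABA_len {l : List ℕ} (h : HasABA l) : 3 ≤ l.length := by
  rw [hasABA_iff] at h
  obtain ⟨a, b, _, hs⟩ := h
  simpa using hs.length_le

lemma pushAll : ∀ (s inp st : List ℕ), ¬ HasABA (s.reverse ++ st) →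
    phiAux (s ++ inp) st = phiAux inp (s.reverse ++ st) := by
  intro s
  induction s with
  | nil => intro inp st _; simp
  | cons x s' ih =>
    intro inp st h
    rw [List.reverse_cons, List.append_assoc] at h ⊢
    match st with
    | [] =>
      rw [List.cons_append, phiAux_emp]
      exact ih inp [x] (by simpa using h)
    | t :: st2 =>
      have hx : ¬ HasABA (x :: t :: st2) := by
        intro hh
        exact h (hasABA_sublist (List.sublist_append_right s'.reverse _) hh)
      rw [List.cons_append, phiAux_push _ hx]
      exact ih inp (x :: t :: st2) h

lemma popToB : ∀ (s : List ℕ) {b : ℕ} (xs st : List ℕ), b ∉ s →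
    phiAux (b :: xs) (s ++ b :: st) = s ++ phiAux (b :: xs) (b :: st) := by
  intro s
  induction s with
  | nil => simp
  | cons t s' ih =>
    intro b xs st hb
    have htb : t ≠ b := fun h => hb (h ▸ List.mem_cons_self (a := t) (l := s'))
    have habs : HasABA (b :: t :: (s' ++ b :: st)) := by
      rw [hasABA_iff]
      refine ⟨b, t, htb, ?_⟩
      refine List.Sublist.cons₂ b (List.Sublist.cons₂ t ?_)
      rw [List.singleton_sublist]
      exact List.mem_append_right s' (List.mem_cons_self (a := b) (l := st))
    rw [List.cons_append, phiAux_pop _ habs, ih xs st (fun h => hb (List.mem_cons_of_mem t h))]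
    simp

lemma hasABA_append_replicate {a : ℕ} {j : ℕ} {l : List ℕ} (ha : a ∉ l) :
    HasABA (l ++ List.replicate j a) ↔ HasABA l := by
  constructor
  · intro h
    rw [hasABA_iff] at h ⊢
    obtain ⟨c, b, hb, hs⟩ := h
    rcases pat_decomp hs with h' | ⟨h1, h2⟩ | ⟨h1, h2, h3⟩ | h'
    · have hc : c = a := List.eq_of_mem_replicate (h'.subset (by simp))
      have hbm : b = a := List.eq_of_mem_replicate (h'.subset (by simp))
      exact absurd (hbm.trans hc.symm) hb
    · exact absurd ((List.eq_of_mem_replicate h2) ▸ h1) ha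
    · exact absurd ((List.eq_of_mem_replicate h3) ▸ h1) ha
    · exact ⟨c, b, hb, h'⟩
  · exact hasABA_sublist (List.sublist_append_left l _)

lemma bottom_replicate {a : ℕ} {j : ℕ} : ∀ (inp st : List ℕ), a ∉ inp → a ∉ st →
    phiAux inp (st ++ List.replicate j a) = phiAux inp st ++ List.replicate j a := by
  intro inp st
  induction inp, st using phiAux.induct with
  | case1 st => intro _ _; rw [phiAux_nil, phiAux_nil]
  | case2 x xs ih =>
    intro hi hs
    have hxa : x ≠ a := fun h => hi (h ▸ List.mem_cons_self (a := x) (l := xs))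
    rw [phiAux_emp]
    match j with
    | 0 => simp [phiAux_emp]
    | j' + 1 =>
      have hpush : ¬ HasABA (x :: List.replicate (j' + 1) a) := by
        have : ¬ HasABA ([x] ++ List.replicate (j'+1) a) := by
          rw [hasABA_append_replicate (by simp only [List.mem_singleton]; exact fun h => hxa h.symm)]
          exact fun h => by simpa using hasABA_len h
        simpa using this
      rw [show ([] : List ℕ) ++ List.replicate (j'+1) a = a :: List.replicate j' a by simp [List.replicate_succ]]
      rw [show (a :: List.replicate j' a) = List.replicate (j'+1) a from (List.replicate_succ (a := a) (n := j')).symm]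
      match hrep : List.replicate (j'+1) a with
      | [] => exact absurd hrep (by simp)
      | t :: st' =>
        rw [phiAux_push _ (hrep ▸ hpush)]
        have := ih (fun h => hi (List.mem_cons_of_mem x h)) (by simp only [List.mem_singleton]; exact fun h => hxa h.symm)
        rw [show x :: t :: st' = [x] ++ (t :: st') from rfl, ← hrep]
        simpa using this
  | case3 x xs t st h ih =>
    intro hi hs
    have key : HasABA (x :: ((t :: st) ++ List.replicate j a)) := by
      have : a ∉ x :: t :: st := by
        simp only [List.mem_cons] at hi hs ⊢
        tauto
      rw [show x :: (t :: st ++ List.replicate j a) = (x :: t :: st) ++ List.replicate j a from rfl,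
        hasABA_append_replicate this]
      exact h
    rw [List.cons_append, phiAux_pop _ (by simpa using key), phiAux_pop _ h, List.cons_append,
      ih hi (fun hm => hs (List.mem_cons_of_mem t hm))]
  | case4 x xs t st h ih =>
    intro hi hs
    have key : ¬ HasABA (x :: ((t :: st) ++ List.replicate j a)) := by
      have : a ∉ x :: t :: st := by
        simp only [List.mem_cons] at hi hs ⊢
        tauto
      rw [show x :: (t :: st ++ List.replicate j a) = (x :: t :: st) ++ List.replicate j a from rfl,
        hasABA_append_replicate this]
      exact h
    rw [List.cons_append, phiAux_push _ (by simpa using key), phiAux_push _ h]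
    exact ih (fun hm => hi (List.mem_cons_of_mem x hm)) (by
      simp only [List.mem_cons] at hi hs ⊢
      tauto)

lemma phi_replicate_append {a : ℕ} {m : ℕ} {t : List ℕ} (ht : a ∉ t) :
    phi (List.replicate m a ++ t) = phi t ++ List.replicate m a := by
  unfold phi
  rw [pushAll _ _ _ (by
    rw [List.append_nil, List.reverse_replicate]
    exact hasABA_single (fun x hx => List.eq_of_mem_replicate hx)),
    List.append_nil, List.reverse_replicate]
  have := bottom_replicate (a := a) (j := m) t [] ht (by simp)
  simpa using this

lemma lemPop {a x : ℕ} {s2 : List ℕ} (hx2 : x ∈ s2) (hxa : x ≠ a) : ∀ (m : ℕ) (xs : List ℕ),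
    phiAux (x :: xs) (List.replicate m a ++ s2) = List.replicate m a ++ phiAux (x :: xs) s2 := by
  intro m
  induction m with
  | zero => simp
  | succ m' ih =>
    intro xs
    have habs : HasABA (x :: a :: (List.replicate m' a ++ s2)) := by
      rw [hasABA_iff]
      refine ⟨x, a, fun h => hxa h.symm, ?_⟩
      exact List.Sublist.cons₂ x (List.Sublist.cons₂ a
        (List.singleton_sublist.mpr (List.mem_append_right _ hx2)))
    rw [List.replicate_succ, List.cons_append, phiAux_pop _ habs, ih xs, List.cons_append]

lemma charac {x a : ℕ} {m : ℕ} {s2 : List ℕ} (hxa : x ≠ a) (ha2 : a ∉ s2) (h2 : ¬ HasABA s2)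
    (h : HasABA (x :: (List.replicate m a ++ s2))) : x ∈ s2 := by
  rw [hasABA_iff] at h
  obtain ⟨c, b, hb, hs⟩ := h
  rcases List.sublist_cons_iff.mp hs with hs' | ⟨r, hr, hrs⟩
  · rcases pat_decomp hs' with h' | ⟨h1, h1'⟩ | ⟨h1, h2', _⟩ | h'
    · exact absurd (hasABA_iff.mpr ⟨c, b, hb, h'⟩) h2
    · exact absurd ((List.eq_of_mem_replicate h1) ▸ h1') ha2
    · exact absurd (hb) (by
        have hc := List.eq_of_mem_replicate h1
        have hbm := List.eq_of_mem_replicate h2'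
        simp [hc, hbm])
    · have hc := List.eq_of_mem_replicate (h'.subset (show c ∈ [c,b,c] by simp))
      have hbm := List.eq_of_mem_replicate (h'.subset (show b ∈ [c,b,c] by simp))
      exact absurd hb (by simp [hc, hbm])
  · have hcx : c = x := by injection hr
    have : x ∈ List.replicate m a ++ s2 := by
      have := hrs.subset
      have hx : x ∈ r := by
        have : r = [b, c] := by injection hr with _ h'; rw [h']
        simp [this, hcx]
      exact hrs.subset hx
    rcases List.mem_append.mp this with hm | hm
    · exact absurd (List.eq_of_mem_replicate hm) hxa
    · exact hm

lemma lemB (n : ℕ) : ∀ (inp st' : List ℕ) {a j : ℕ},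
    2 * inp.length + st'.length ≤ n →
    ¬ HasABA (st' ++ List.replicate j a) → a ∉ st' → 1 ≤ j →
    ∃ o1, phiAux inp (st' ++ List.replicate j a) = o1 ++ List.replicate (j + inp.count a) a
      ∧ a ∉ o1 := by
  induction n with
  | zero =>
    intro inp st' a j hn hno ha hj
    have h1 : inp = [] := by
      cases inp with
      | nil => rfl
      | cons x xs => simp at hn
    subst h1
    refine ⟨st', ?_, ha⟩
    simp [phiAux_nil]
  | succ n ih =>
    intro inp st' a j hn hno ha hj
    match inp with
    | [] =>
      refine ⟨st', ?_, ha⟩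
      simp [phiAux_nil]
    | x :: xs =>
      by_cases hxa : x = a
      · subst hxa
        match st' with
        | [] =>
          obtain ⟨j', rfl⟩ : ∃ j', j = j' + 1 := ⟨j - 1, by omega⟩
          have hpush : ¬ HasABA (x :: (List.replicate (j' + 1) x)) := by
            exact hasABA_single (fun y hy => by
              rcases List.mem_cons.mp hy with rfl | hm
              · rfl
              · exact List.eq_of_mem_replicate hm)
          rw [List.nil_append, List.replicate_succ, phiAux_push _ (by
            rwa [List.replicate_succ] at hpush)]
          rw [← List.replicate_succ, ← List.replicate_succ]
          have := ih xs [] (a := x) (j := j' + 2) (by simp at hn ⊢; omega)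
            (by
              rw [List.nil_append]
              exact hasABA_single (fun y hy => List.eq_of_mem_replicate hy))
            (by simp) (by omega)
          rw [List.nil_append] at this
          obtain ⟨o1, heq, ho1⟩ := this
          refine ⟨o1, ?_, ho1⟩
          rw [heq, List.count_cons_self]
          congr 2
          omega
        | t :: st'' =>
          have hta : t ≠ x := fun h => ha (h ▸ List.mem_cons_self (a := t) (l := st''))
          have habs : HasABA (x :: (t :: st'') ++ List.replicate j x) := by
            rw [hasABA_iff]
            refine ⟨x, t, hta, ?_⟩
            refine List.Sublist.cons₂ x (List.Sublist.cons₂ t ?_)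
            rw [List.singleton_sublist]
            exact List.mem_append_right _ (List.mem_replicate.mpr ⟨by omega, rfl⟩)
          rw [List.cons_append, phiAux_pop _ (by simpa using habs)]
          have := ih (x :: xs) st'' (a := x) (j := j) (by simp at hn ⊢; omega)
            (fun h => hno (hasABA_sublist (by simp [List.cons_append]) h))
            (fun h => ha (List.mem_cons_of_mem t h)) hj
          obtain ⟨o1, heq, ho1⟩ := this
          exact ⟨t :: o1, by rw [heq, List.cons_append], by
            simp only [List.mem_cons]
            rintro (rfl | hm)
            · exact hta rfl
            · exact ho1 hm⟩
      · match st' with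
        | [] =>
          obtain ⟨j', rfl⟩ : ∃ j', j = j' + 1 := ⟨j - 1, by omega⟩
          have hpush : ¬ HasABA (x :: List.replicate (j' + 1) a) := by
            have : ¬ HasABA ([x] ++ List.replicate (j' + 1) a) := by
              rw [hasABA_append_replicate (by
                simp only [List.mem_singleton]
                exact fun h => hxa h.symm)]
              exact fun h => by simpa using hasABA_len h
            simpa using this
          rw [List.nil_append, List.replicate_succ, phiAux_push _ (by
            rwa [List.replicate_succ] at hpush)]
          have := ih xs [x] (a := a) (j := j' + 1) (by simp at hn ⊢; omega)
            (by simpa using hpush)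
            (by simp only [List.mem_singleton]; exact fun h => hxa h.symm) (by omega)
          obtain ⟨o1, heq, ho1⟩ := this
          refine ⟨o1, ?_, ho1⟩
          rw [show x :: a :: List.replicate j' a = [x] ++ List.replicate (j' + 1) a by
            simp [List.replicate_succ], heq, List.count_cons_of_ne hxa]
        | t :: st'' =>
          by_cases habs : HasABA (x :: ((t :: st'') ++ List.replicate j a))
          · rw [List.cons_append, phiAux_pop _ (by simpa using habs)]
            have hta : t ≠ a := fun h => ha (h ▸ List.mem_cons_self (a := t) (l := st''))
            have := ih (x :: xs) st'' (a := a) (j := j) (by simp at hn ⊢; omega)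
              (fun h => hno (hasABA_sublist (by simp [List.cons_append]) h))
              (fun h => ha (List.mem_cons_of_mem t h)) hj
            obtain ⟨o1, heq, ho1⟩ := this
            exact ⟨t :: o1, by rw [heq, List.cons_append], by
              simp only [List.mem_cons]
              rintro (rfl | hm)
              · exact hta rfl
              · exact ho1 hm⟩
          · rw [List.cons_append, phiAux_push _ (by simpa using habs)]
            have := ih xs (x :: t :: st'') (a := a) (j := j) (by simp at hn ⊢; omega)
              (by simpa using habs)
              (by
                simp only [List.mem_cons]
                rintro (rfl | h | hm)
                · exact hxa rfl
                · exact ha (h ▸ List.mem_cons_self (a := t) (l := st''))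
                · exact ha (List.mem_cons_of_mem t hm)) hj
            obtain ⟨o1, heq, ho1⟩ := this
            refine ⟨o1, ?_, ho1⟩
            rw [show x :: t :: (st'' ++ List.replicate j a)
              = (x :: t :: st'') ++ List.replicate j a by simp, heq,
              List.count_cons_of_ne hxa]

lemma noABA_stack_cons {a : ℕ} {s2 : List ℕ} (ha2 : a ∉ s2) (h2 : ¬ HasABA s2) (k : ℕ) :
    ¬ HasABA (List.replicate k a ++ s2) :=
  noABA_append_disjoint (hasABA_single (fun y hy => List.eq_of_mem_replicate hy)) h2
    (fun _ hx hy => ha2 ((List.eq_of_mem_replicate hx) ▸ hy))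

lemma lemC (n : ℕ) : ∀ (inp s1 : List ℕ) {a m r : ℕ} {i2 s2 : List ℕ},
    2 * inp.length + s1.length ≤ n →
    inp = List.replicate r a ++ i2 → a ∉ i2 → a ∉ s1 → a ∉ s2 → 1 ≤ m →
    (1 ≤ r → s1 = []) →
    ¬ HasABA (s1 ++ (List.replicate m a ++ s2)) →
    ∃ o1 o2, phiAux inp (s1 ++ (List.replicate m a ++ s2)) =
      o1 ++ List.replicate (m + r) a ++ o2 ∧ a ∉ o1 ∧ a ∉ o2 := by
  induction n with
  | zero =>
    intro inp s1 a m r i2 s2 hn hinp hi2 ha1 ha2 hm hr hno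
    have h1 : inp = [] := by
      cases inp with
      | nil => rfl
      | cons x xs => simp at hn
    have hr0 : r = 0 := by
      rw [h1] at hinp
      have := congrArg List.length hinp
      simp at this
      omega
    subst h1; subst hr0
    exact ⟨s1, s2, by simp [phiAux_nil], ha1, ha2⟩
  | succ n ih =>
    intro inp s1 a m r i2 s2 hn hinp hi2 ha1 ha2 hm hr hno
    have hs2no : ¬ HasABA s2 := fun h => hno (hasABA_sublist
      ((List.sublist_append_right _ s2).trans (List.sublist_append_right s1 _)) h)
    match inp, hinp with
    | [], hinp =>
      have hr0 : r = 0 := by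
        have := congrArg List.length hinp
        simp at this
        omega
      subst hr0
      exact ⟨s1, s2, by simp [phiAux_nil], ha1, ha2⟩
    | x :: xs, hinp =>
      by_cases hxa : x = a
      · -- incoming letter is a; r ≥ 1 and s1 = []
        subst hxa
        obtain ⟨r', rfl⟩ : ∃ r', r = r' + 1 := by
          refine ⟨r - 1, ?_⟩
          rcases Nat.eq_zero_or_pos r with h0 | h0
          · subst h0
            simp at hinp
            exact absurd (hinp ▸ List.mem_cons_self (a := x) (l := xs)) hi2
          · omega
        have hs1 : s1 = [] := hr (by omega)
        subst hs1
        have hxs : xs = List.replicate r' x ++ i2 := by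
          rw [List.replicate_succ, List.cons_append] at hinp
          injection hinp with _ h
        obtain ⟨m', rfl⟩ : ∃ m', m = m' + 1 := ⟨m - 1, by omega⟩
        have hpush : ¬ HasABA (x :: (List.replicate (m' + 1) x ++ s2)) := by
          have := noABA_stack_cons ha2 hs2no (m' + 2)
          rwa [List.replicate_succ, List.cons_append] at this
        rw [List.nil_append, List.replicate_succ, List.cons_append,
          phiAux_push _ (by rwa [List.replicate_succ, List.cons_append] at hpush)]
        have := ih xs [] (a := x) (m := m' + 2) (r := r') (i2 := i2) (s2 := s2)
          (by simp at hn ⊢; omega) hxs hi2 (by simp) ha2 (by omega) (fun _ => rfl)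
          (by
            rw [List.nil_append]
            exact noABA_stack_cons ha2 hs2no (m' + 2))
        rw [List.nil_append] at this
        obtain ⟨o1, o2, heq, ho1, ho2⟩ := this
        refine ⟨o1, o2, ?_, ho1, ho2⟩
        rw [show x :: x :: (List.replicate m' x ++ s2)
          = List.replicate (m' + 2) x ++ s2 by simp [List.replicate_succ], heq]
        congr 3
        omega
      · -- incoming letter x ≠ a, so r = 0
        have hr0 : r = 0 := by
          rcases Nat.eq_zero_or_pos r with h0 | h0
          · exact h0
          · obtain ⟨r', rfl⟩ : ∃ r', r = r' + 1 := ⟨r - 1, by omega⟩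
            rw [List.replicate_succ, List.cons_append] at hinp
            have hh : x = a := by injection hinp
            exact absurd hh hxa
        subst hr0
        simp only [List.replicate_zero, List.nil_append] at hinp
        subst hinp
        match s1, ha1 with
        | t :: s1', ha1 =>
          have hta : t ≠ a := fun h => ha1 (h ▸ List.mem_cons_self (a := t) (l := s1'))
          by_cases habs : HasABA (x :: ((t :: s1') ++ (List.replicate m a ++ s2)))
          · rw [List.cons_append, phiAux_pop _ (by simpa using habs)]
            have := ih (x :: xs) s1' (a := a) (m := m) (r := 0) (i2 := x :: xs) (s2 := s2)
              (by simp at hn ⊢; omega) (by simp) hi2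
              (fun h => ha1 (List.mem_cons_of_mem t h)) ha2 hm (by omega)
              (fun h => hno (hasABA_sublist (by simp [List.cons_append]) h))
            obtain ⟨o1, o2, heq, ho1, ho2⟩ := this
            refine ⟨t :: o1, o2, by rw [heq]; simp, ?_, ho2⟩
            simp only [List.mem_cons]
            rintro (rfl | hmm)
            · exact hta rfl
            · exact ho1 hmm
          · rw [List.cons_append, phiAux_push _ (by simpa using habs)]
            have := ih xs (x :: t :: s1') (a := a) (m := m) (r := 0) (i2 := xs) (s2 := s2)
              (by simp at hn ⊢; omega) (by simp) (fun h => hi2 (List.mem_cons_of_mem x h))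
              (by
                simp only [List.mem_cons]
                rintro (rfl | h | hmm)
                · exact hxa rfl
                · exact ha1 (h ▸ List.mem_cons_self (a := t) (l := s1'))
                · exact ha1 (List.mem_cons_of_mem t hmm))
              ha2 hm (by omega) (by simpa using habs)
            obtain ⟨o1, o2, heq, ho1, ho2⟩ := this
            exact ⟨o1, o2, by rw [← heq]; simp, ho1, ho2⟩
        | [], _ =>
          obtain ⟨m', rfl⟩ : ∃ m', m = m' + 1 := ⟨m - 1, by omega⟩
          by_cases habs : HasABA (x :: (List.replicate (m' + 1) a ++ s2))
          · have hx2 : x ∈ s2 := charac hxa ha2 hs2no habs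
            rw [List.nil_append, lemPop hx2 hxa (m' + 1) xs]
            refine ⟨[], phiAux (x :: xs) s2, by simp, by simp, ?_⟩
            intro hmem
            have := (phiAux_perm (x :: xs) s2).mem_iff.mp hmem
            rcases List.mem_append.mp this with h | h
            · exact hi2 h
            · exact ha2 h
          · rw [List.nil_append, List.replicate_succ, List.cons_append,
              phiAux_push _ (by rwa [List.replicate_succ, List.cons_append] at habs)]
            have := ih xs [x] (a := a) (m := m' + 1) (r := 0) (i2 := xs) (s2 := s2)
              (by simp at hn ⊢; omega) (by simp) (fun h => hi2 (List.mem_cons_of_mem x h))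
              (by simp only [List.mem_singleton]; exact fun h => hxa h.symm)
              ha2 (by omega) (by omega) (by simpa using habs)
            obtain ⟨o1, o2, heq, ho1, ho2⟩ := this
            refine ⟨o1, o2, ?_, ho1, ho2⟩
            rw [show x :: a :: (List.replicate m' a ++ s2)
              = [x] ++ (List.replicate (m' + 1) a ++ s2) by simp [List.replicate_succ], heq]
            simp [List.replicate_succ]

lemma lemA (n : ℕ) : ∀ (inp st : List ℕ) {a r : ℕ} {i1 i2 : List ℕ},
    2 * inp.length + st.length ≤ n →
    inp = i1 ++ (List.replicate r a ++ i2) → a ∉ i1 → a ∉ i2 → a ∉ st → ¬ HasABA st →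
    ∃ o1 o2, phiAux inp st = o1 ++ List.replicate r a ++ o2 ∧ a ∉ o1 ∧ a ∉ o2 := by
  induction n with
  | zero =>
    intro inp st a r i1 i2 hn hinp hi1 hi2 hast hno
    have h1 : inp = [] := by
      cases inp with
      | nil => rfl
      | cons x xs => simp at hn
    have hr0 : r = 0 := by
      rw [h1] at hinp
      have := congrArg List.length hinp
      simp at this
      omega
    subst h1; subst hr0
    exact ⟨st, [], by simp [phiAux_nil], hast, by simp⟩
  | succ n ih =>
    intro inp st a r i1 i2 hn hinp hi1 hi2 hast hno
    rcases Nat.eq_zero_or_pos r with hr0 | hrpos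
    · subst hr0
      refine ⟨phiAux inp st, [], by simp, ?_, by simp⟩
      intro hmem
      have := (phiAux_perm inp st).mem_iff.mp hmem
      rcases List.mem_append.mp this with h | h
      · rw [hinp] at h
        rcases List.mem_append.mp h with h' | h'
        · exact hi1 h'
        · exact hi2 (by simpa using h')
      · exact hast h
    · match inp, hinp with
      | [], hinp =>
        have := congrArg List.length hinp
        simp at this
        omega
      | x :: xs, hinp =>
        match i1, hinp with
        | y :: i1', hinp =>
          obtain ⟨rfl, hxs⟩ : x = y ∧ xs = i1' ++ (List.replicate r a ++ i2) := by
            rw [List.cons_append] at hinp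
            exact ⟨by injection hinp, by injection hinp⟩
          have hya : x ≠ a := fun h => hi1 (h ▸ List.mem_cons_self (a := x) (l := i1'))
          have hi1' : a ∉ i1' := fun h => hi1 (List.mem_cons_of_mem _ h)
          match st with
          | [] =>
            rw [phiAux_emp]
            exact ih xs [x] (by simp at hn ⊢; omega) hxs hi1' hi2
              (by simp only [List.mem_singleton]; exact fun h => hya h.symm)
              (fun h => by simpa using hasABA_len h)
          | t :: st2 =>
            have hta : t ≠ a := fun h => hast (h ▸ List.mem_cons_self (a := t) (l := st2))
            by_cases habs : HasABA (x :: t :: st2)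
            · rw [phiAux_pop _ habs]
              have := ih (x :: xs) st2 (a := a) (r := r) (i1 := x :: i1') (i2 := i2)
                (by simp at hn ⊢; omega) (by simp [hxs])
                (by
                  simp only [List.mem_cons]
                  rintro (rfl | h)
                  · exact hya rfl
                  · exact hi1' h)
                hi2 (fun h => hast (List.mem_cons_of_mem t h))
                (fun h => hno (hasABA_sublist (List.sublist_cons_self t st2) h))
              obtain ⟨o1, o2, heq, ho1, ho2⟩ := this
              refine ⟨t :: o1, o2, by rw [heq]; simp, ?_, ho2⟩
              simp only [List.mem_cons]
              rintro (rfl | hmm)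
              · exact hta rfl
              · exact ho1 hmm
            · rw [phiAux_push _ habs]
              exact ih xs (x :: t :: st2) (by simp at hn ⊢; omega) hxs hi1' hi2
                (by
                  simp only [List.mem_cons]
                  rintro (rfl | h | hmm)
                  · exact hya rfl
                  · exact hast (h ▸ List.mem_cons_self (a := t) (l := st2))
                  · exact hast (List.mem_cons_of_mem t hmm))
                habs
        | [], hinp =>
          obtain ⟨r', rfl⟩ : ∃ r', r = r' + 1 := ⟨r - 1, by omega⟩
          rw [List.nil_append, List.replicate_succ, List.cons_append] at hinp
          obtain ⟨rfl, hxs⟩ : x = a ∧ xs = List.replicate r' a ++ i2 :=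
            ⟨by injection hinp, by injection hinp⟩
          match st with
          | [] =>
            rw [phiAux_emp]
            have := lemC (2 * xs.length) xs [] (a := x) (m := 1) (r := r') (i2 := i2)
              (s2 := []) (by simp) hxs hi2 (by simp) (by simp) (by omega) (fun _ => rfl)
              (by
                simp only [List.nil_append, List.append_nil]
                exact hasABA_single (fun y hy => List.eq_of_mem_replicate hy))
            simp only [List.nil_append, List.append_nil, List.replicate_one] at this
            obtain ⟨o1, o2, heq, ho1, ho2⟩ := this
            refine ⟨o1, o2, ?_, ho1, ho2⟩
            rw [heq]
            congr 3
            omega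
          | t :: st2 =>
            have hpush : ¬ HasABA (x :: t :: st2) := by
              have := noABA_append_disjoint (l₁ := [x]) (l₂ := t :: st2)
                (fun h => by simpa using hasABA_len h) hno
                (fun y hy hmem => hast (by simp only [List.mem_singleton] at hy; exact hy ▸ hmem))
              simpa using this
            rw [phiAux_push _ hpush]
            have := lemC (2 * xs.length + 1) xs [] (a := x) (m := 1) (r := r') (i2 := i2)
              (s2 := t :: st2) (by simp) hxs hi2 (by simp) hast (by omega)
              (fun _ => rfl)
              (by simpa using hpush)
            simp only [List.nil_append, List.replicate_one] at this
            obtain ⟨o1, o2, heq, ho1, ho2⟩ := this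
            refine ⟨o1, o2, ?_, ho1, ho2⟩
            rw [show x :: t :: st2 = [x] ++ (t :: st2) from rfl, heq]
            congr 3
            omega

def CluB (a : ℕ) (l : List ℕ) : Prop := ∀ b ∈ l, b ≠ a → ¬ ([a, b, a] <+ l)

lemma cluB_of_not_mem {a : ℕ} {l : List ℕ} (h : a ∉ l) : CluB a l :=
  fun _ _ _ hs => h (hs.subset (by simp))

lemma cluB_sublist {a : ℕ} {l l' : List ℕ} (h : l' <+ l) (hc : CluB a l) : CluB a l' :=
  fun b hb hba hs => hc b (h.subset hb) hba (hs.trans h)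

lemma sortedWord_iff_cluB {l : List ℕ} : SortedWord l ↔ ∀ a, CluB a l := by
  rw [sortedWord_iff]
  constructor
  · intro h a b _ hba hs
    exact h (hasABA_iff.mpr ⟨a, b, hba, hs⟩)
  · intro h hh
    obtain ⟨a, b, hba, hs⟩ := hasABA_iff.mp hh
    exact h a b (hs.subset (by simp)) hba hs

lemma cluB_block {a : ℕ} {k : ℕ} {l l1 l2 : List ℕ}
    (hl : l = l1 ++ (List.replicate k a ++ l2)) (h1 : a ∉ l1) (h2 : a ∉ l2) : CluB a l := by
  intro b _ hba hs
  rw [hl] at hs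
  rcases pat_decomp hs with h' | ⟨hm1, hm2⟩ | ⟨hm1, _, hm3⟩ | h'
  · rcases pat_decomp h' with h'' | ⟨hn1, hn2⟩ | ⟨hn1, hn2, _⟩ | h''
    · exact h2 (h''.subset (by simp))
    · exact h2 hn2
    · exact hba (List.eq_of_mem_replicate hn2)
    · exact hba (List.eq_of_mem_replicate (h''.subset (by simp)))
  · exact h1 hm1
  · exact h1 hm1
  · exact h1 (h'.subset (by simp))

lemma clu_head {a : ℕ} : ∀ {l' : List ℕ}, CluB a (a :: l') →
    ∃ k l2, l' = List.replicate k a ++ l2 ∧ a ∉ l2 := by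
  intro l'
  induction l' with
  | nil => exact fun _ => ⟨0, [], by simp, by simp⟩
  | cons y l'' ih =>
    intro hc
    by_cases hya : y = a
    · subst hya
      obtain ⟨k, l2, heq, h2⟩ := ih (cluB_sublist (by
        exact List.Sublist.cons₂ y (List.sublist_cons_self y l'')) hc)
      exact ⟨k + 1, l2, by rw [List.replicate_succ, List.cons_append, heq], h2⟩
    · refine ⟨0, y :: l'', by simp, ?_⟩
      simp only [List.mem_cons]
      rintro (h | h)
      · exact hya h.symm
      · refine hc y (by simp) hya ?_
        exact List.Sublist.cons₂ a (List.Sublist.cons₂ y (List.singleton_sublist.mpr h))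

lemma cluB_decomp {a : ℕ} : ∀ {l : List ℕ}, CluB a l →
    ∃ l1 k l2, l = l1 ++ (List.replicate k a ++ l2) ∧ a ∉ l1 ∧ a ∉ l2 := by
  intro l
  induction l with
  | nil => exact fun _ => ⟨[], 0, [], by simp, by simp, by simp⟩
  | cons x l' ih =>
    intro hc
    by_cases hxa : x = a
    · subst hxa
      obtain ⟨k, l2, heq, h2⟩ := clu_head hc
      exact ⟨[], k + 1, l2, by rw [List.replicate_succ]; simp [heq], by simp, h2⟩
    · obtain ⟨l1, k, l2, heq, h1, h2⟩ := ih (cluB_sublist (List.sublist_cons_self x l') hc)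
      refine ⟨x :: l1, k, l2, by rw [heq, List.cons_append], ?_, h2⟩
      simp only [List.mem_cons]
      rintro (h | h)
      · exact hxa h.symm
      · exact h1 h

lemma cluB_rep_left {a b : ℕ} {j : ℕ} {t : List ℕ} (hba : b ≠ a) :
    CluB b (List.replicate j a ++ t) ↔ CluB b t := by
  constructor
  · intro hc c hct hcb hs
    exact hc c (List.mem_append_right _ hct) hcb (hs.trans (List.sublist_append_right _ t))
  · intro hc c hcm hcb hs
    rcases pat_decomp hs with h' | ⟨hm1, _⟩ | ⟨hm1, _, _⟩ | h'
    · exact hc c (h'.subset (by simp)) hcb h'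
    · exact hba (List.eq_of_mem_replicate hm1)
    · exact hba (List.eq_of_mem_replicate hm1)
    · exact hba (List.eq_of_mem_replicate (h'.subset (by simp)))

lemma cluB_rep_right {a b : ℕ} {j : ℕ} {t : List ℕ} (hba : b ≠ a) :
    CluB b (t ++ List.replicate j a) ↔ CluB b t := by
  constructor
  · intro hc c hct hcb hs
    exact hc c (List.mem_append_left _ hct) hcb (hs.trans (List.sublist_append_left t _))
  · intro hc c hcm hcb hs
    rcases pat_decomp hs with h' | ⟨hm1, hm2⟩ | ⟨hm1, _, hm3⟩ | h'
    · exact hba (List.eq_of_mem_replicate (h'.subset (by simp)))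
    · exact hba (List.eq_of_mem_replicate hm2)
    · exact hba (List.eq_of_mem_replicate hm3)
    · exact hc c (h'.subset (by simp)) hcb h'

open Classical in
noncomputable def nc (p : List ℕ) : ℕ :=
  (p.toFinset.filter (fun a => ¬ CluB a p)).card

open Classical in
lemma nc_le_card (p : List ℕ) : nc p ≤ p.toFinset.card := by
  unfold nc
  convert Finset.card_filter_le p.toFinset _

open Classical in
lemma nc_eq_zero_iff {p : List ℕ} : nc p = 0 ↔ SortedWord p := by
  unfold nc
  rw [Finset.card_eq_zero, Finset.filter_eq_empty_iff, sortedWord_iff_cluB]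
  constructor
  · intro h a
    by_cases ha : a ∈ p
    · have := h (List.mem_toFinset.mpr ha)
      simpa using this
    · exact cluB_of_not_mem ha
  · intro h a _
    simpa using h a

lemma phi_perm (p : List ℕ) : phi p ~ p := by
  have := phiAux_perm p []
  simpa [phi] using this

lemma L1 {a : ℕ} {p : List ℕ} (hc : CluB a p) : CluB a (phi p) := by
  by_cases hm : a ∈ p
  · obtain ⟨l1, k, l2, heq, h1, h2⟩ := cluB_decomp hc
    have := lemA (2 * p.length) p [] (a := a) (r := k) (i1 := l1) (i2 := l2)
      (by simp) heq h1 h2 (by simp) (fun h => by simpa using hasABA_len h)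
    obtain ⟨o1, o2, ho, ho1, ho2⟩ := this
    exact cluB_block (l1 := o1) (l2 := o2) (by rw [← List.append_assoc]; exact ho) ho1 ho2
  · exact cluB_of_not_mem (fun h => hm ((phi_perm p).subset h))

lemma L2 {x : ℕ} {rest : List ℕ} : CluB x (phi (x :: rest)) := by
  have heq : phi (x :: rest) = phiAux rest [x] := by
    rw [phi, phiAux_emp]
  have := lemB (2 * rest.length + 1) rest [] (a := x) (j := 1)
    (by simp) (by
      simp only [List.nil_append, List.replicate_one]
      exact fun h => by simpa using hasABA_len h) (by simp) (by omega)
  simp only [List.nil_append, List.replicate_one] at this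
  obtain ⟨o1, ho, ho1⟩ := this
  refine cluB_block (l1 := o1) (k := 1 + rest.count x) (l2 := [])
    (by rw [heq, ho]; simp) ho1 (by simp)

open Classical in
lemma nc_mono_subset {p q : List ℕ} (hfin : q.toFinset = p.toFinset)
    (h : ∀ a, CluB a p → CluB a q) : nc q ≤ nc p := by
  unfold nc
  refine Finset.card_le_card ?_
  intro b hb
  simp only [Finset.mem_filter, List.mem_toFinset] at hb ⊢
  refine ⟨by rw [← List.mem_toFinset, ← hfin, List.mem_toFinset]; exact hb.1, ?_⟩
  exact fun hcb => hb.2 (h b hcb)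

open Classical in
lemma nc_strict {p q : List ℕ} (hfin : q.toFinset = p.toFinset)
    (h : ∀ a, CluB a p → CluB a q) {x : ℕ} (hx : x ∈ p) (hxp : ¬ CluB x p)
    (hxq : CluB x q) : nc q < nc p := by
  unfold nc
  refine Finset.card_lt_card ?_
  rw [Finset.ssubset_iff_of_subset ?sub]
  case sub =>
    intro b hb
    simp only [Finset.mem_filter, List.mem_toFinset] at hb ⊢
    refine ⟨by rw [← List.mem_toFinset, ← hfin, List.mem_toFinset]; exact hb.1, ?_⟩
    exact fun hcb => hb.2 (h b hcb)
  refine ⟨x, ?_, ?_⟩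
  · simp only [Finset.mem_filter, List.mem_toFinset]
    exact ⟨hx, hxp⟩
  · simp only [Finset.mem_filter, List.mem_toFinset]
    rintro ⟨_, hh⟩
    exact hh hxq

open Classical in
lemma nc_rep_left {x : ℕ} {m : ℕ} {t : List ℕ} (hx : x ∉ t) :
    nc (List.replicate m x ++ t) = nc t := by
  unfold nc
  congr 1
  ext b
  simp only [Finset.mem_filter, List.mem_toFinset, List.mem_append, List.mem_replicate]
  by_cases hbx : b = x
  · subst hbx
    constructor
    · rintro ⟨_, hnc⟩
      exact absurd (cluB_block (l1 := []) (k := m) (l2 := t) (by simp) (by simp) hx) hnc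
    · rintro ⟨hm, _⟩
      exact absurd hm hx
  · rw [cluB_rep_left hbx]
    constructor
    · rintro ⟨(⟨_, h⟩ | h), hnc⟩
      · exact absurd h hbx
      · exact ⟨h, hnc⟩
    · rintro ⟨h, hnc⟩
      exact ⟨Or.inr h, hnc⟩

open Classical in
lemma nc_rep_right {x : ℕ} {m : ℕ} {t : List ℕ} (hx : x ∉ t) :
    nc (t ++ List.replicate m x) = nc t := by
  unfold nc
  congr 1
  ext b
  simp only [Finset.mem_filter, List.mem_toFinset, List.mem_append, List.mem_replicate]
  by_cases hbx : b = x
  · subst hbx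
    constructor
    · rintro ⟨_, hnc⟩
      exact absurd (cluB_block (l1 := t) (k := m) (l2 := []) (by simp) hx (by simp)) hnc
    · rintro ⟨hm, _⟩
      exact absurd hm hx
  · rw [cluB_rep_right hbx]
    constructor
    · rintro ⟨(h | ⟨_, h⟩), hnc⟩
      · exact ⟨h, hnc⟩
      · exact absurd h hbx
    · rintro ⟨h, hnc⟩
      exact ⟨Or.inl h, hnc⟩

lemma sortedNilW : SortedWord [] :=
  sortedWord_iff.mpr (fun h => by simpa using hasABA_len h)

lemma decrease : ∀ (n : ℕ) (p : List ℕ), p.length ≤ n → ¬ SortedWord p →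
    nc (phi p) < nc p := by
  intro n
  induction n with
  | zero =>
    intro p hn hns
    have : p = [] := by
      cases p with
      | nil => rfl
      | cons x xs => simp at hn
    exact absurd (this ▸ sortedNilW) hns
  | succ n ih =>
    intro p hn hns
    match p with
    | [] => exact absurd sortedNilW hns
    | x :: rest =>
      by_cases hc : CluB x (x :: rest)
      · obtain ⟨k, t, heq, hxt⟩ := clu_head hc
        have hp : x :: rest = List.replicate (k + 1) x ++ t := by
          rw [List.replicate_succ, List.cons_append, heq]
        have hphi : phi (x :: rest) = phi t ++ List.replicate (k + 1) x := by
          rw [hp]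
          exact phi_replicate_append hxt
        have htns : ¬ SortedWord t := by
          intro hts
          apply hns
          rw [sortedWord_iff] at hts ⊢
          intro hh
          rw [hp] at hh
          obtain ⟨c, b, hb, hs⟩ := hasABA_iff.mp hh
          rcases pat_decomp hs with h' | ⟨hm1, hm2⟩ | ⟨hm1, _, hm3⟩ | h'
          · exact hts (hasABA_iff.mpr ⟨c, b, hb, h'⟩)
          · exact hxt ((List.eq_of_mem_replicate hm1) ▸ hm2)
          · exact hxt ((List.eq_of_mem_replicate hm1) ▸ hm3)
          · have hcx : c = x := List.eq_of_mem_replicate (h'.subset (by simp))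
            have hbx : b = x := List.eq_of_mem_replicate (h'.subset (by simp))
            exact hb (hbx.trans hcx.symm)
        have hlt : t.length ≤ n := by
          have := congrArg List.length hp
          simp at this hn
          omega
        have hxphit : x ∉ phi t := fun h => hxt ((phi_perm t).subset h)
        calc nc (phi (x :: rest)) = nc (phi t) := by rw [hphi, nc_rep_right hxphit]
          _ < nc t := ih t hlt htns
          _ = nc (x :: rest) := by rw [hp, nc_rep_left hxt]
      · exact nc_strict (List.toFinset_eq_of_perm _ _ (phi_perm (x :: rest))) (fun a => L1)
          (List.mem_cons_self (a := x) (l := rest)) hc L2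

lemma sorted_phi {p : List ℕ} (h : SortedWord p) : SortedWord (phi p) := by
  rw [← nc_eq_zero_iff] at h ⊢
  have := nc_mono_subset (List.toFinset_eq_of_perm _ _ (phi_perm p)) (fun a => L1 (p := p))
  omega

lemma part1_aux : ∀ (k : ℕ) (p : List ℕ), nc p ≤ k → SortedWord (phi^[k] p) := by
  intro k
  induction k with
  | zero =>
    intro p hp
    simpa using nc_eq_zero_iff.mp (by omega)
  | succ k ih =>
    intro p hp
    rw [Function.iterate_succ_apply]
    by_cases hs : SortedWord p
    · exact ih (phi p) (by rw [nc_eq_zero_iff.mpr (sorted_phi hs)]; omega)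
    · exact ih (phi p) (by have := decrease p.length p le_rfl hs; omega)

lemma noABA_of_nodup {l : List ℕ} (h : l.Nodup) : ¬ HasABA l := by
  intro hh
  obtain ⟨a, b, hb, hs⟩ := hasABA_iff.mp hh
  have h2 : List.count a [a, b, a] = 2 := by
    simp [List.count_cons, hb]
  have := hs.count_le a
  rw [h2] at this
  have := List.nodup_iff_count_le_one.mp h a
  omega

lemma noABA_rev {l : List ℕ} (h : ¬ HasABA l) : ¬ HasABA l.reverse := by
  rwa [hasABA_reverse]

lemma lemClass {b : ℕ} {x u y z : List ℕ}
    (hxno : ¬ HasABA x) (hyno : ¬ HasABA y) (hzno : ¬ HasABA z) (huno : ¬ HasABA u)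
    (dxy : ∀ c, c ∈ x → c ∈ y → False) (dxz : ∀ c, c ∈ x → c ∈ z → False)
    (dxu : ∀ c, c ∈ x → c ∈ u → False) (dyz : ∀ c, c ∈ y → c ∈ z → False)
    (dyu : ∀ c, c ∈ y → c ∈ u → False) (dzu : ∀ c, c ∈ z → c ∈ u → False)
    (hbx : b ∉ x) (hby : b ∉ y) (hbz : b ∉ z) (hbu : b ∉ u) :
    phi (x ++ ((b :: u) ++ (y ++ ((b :: u) ++ z)))) =
      (y.reverse ++ u.reverse) ++ (z.reverse ++ (u.reverse ++ (b :: b :: x.reverse))) := by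
  have nb1 : ¬ HasABA (u.reverse ++ [b]) :=
    noABA_append_disjoint (noABA_rev huno) (fun h => by simpa using hasABA_len h)
      (fun c hc1 hc2 => hbu (by
        simp only [List.mem_singleton] at hc2
        rw [← hc2]
        exact List.mem_reverse.mp hc1))
  have h2 : ¬ HasABA ((u.reverse ++ [b]) ++ x.reverse) :=
    noABA_append_disjoint nb1 (noABA_rev hxno) (fun c hc1 hc2 => by
      have hcx : c ∈ x := List.mem_reverse.mp hc2
      rcases List.mem_append.mp hc1 with h | h
      · exact dxu c hcx (List.mem_reverse.mp h)
      · simp only [List.mem_singleton] at h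
        exact hbx (h ▸ hcx))
  have h3 : ¬ HasABA (y.reverse ++ ((u.reverse ++ [b]) ++ x.reverse)) :=
    noABA_append_disjoint (noABA_rev hyno) h2 (fun c hc1 hc2 => by
      have hcy : c ∈ y := List.mem_reverse.mp hc1
      rcases List.mem_append.mp hc2 with h | h
      · rcases List.mem_append.mp h with h' | h'
        · exact dyu c hcy (List.mem_reverse.mp h')
        · simp only [List.mem_singleton] at h'
          exact hby (h' ▸ hcy)
      · exact dxy c (List.mem_reverse.mp h) hcy)
  have hbb : ¬ HasABA (b :: b :: x.reverse) := by
    have : ¬ HasABA ([b, b] ++ x.reverse) :=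
      noABA_append_disjoint (hasABA_single (fun c hc => by
        simp only [List.mem_cons, List.not_mem_nil, or_false] at hc
        tauto)) (noABA_rev hxno)
        (fun c hc1 hc2 => by
          simp only [List.mem_cons, List.not_mem_nil, or_false] at hc1
          rcases hc1 with rfl | rfl <;> exact hbx (List.mem_reverse.mp hc2))
    simpa using this
  have h6 : ¬ HasABA (u.reverse ++ (b :: b :: x.reverse)) :=
    noABA_append_disjoint (noABA_rev huno) hbb (fun c hc1 hc2 => by
      have hcu : c ∈ u := List.mem_reverse.mp hc1
      simp only [List.mem_cons] at hc2
      rcases hc2 with rfl | rfl | h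
      · exact hbu hcu
      · exact hbu hcu
      · exact dxu c (List.mem_reverse.mp h) hcu)
  have h7 : ¬ HasABA (z.reverse ++ (u.reverse ++ (b :: b :: x.reverse))) :=
    noABA_append_disjoint (noABA_rev hzno) h6 (fun c hc1 hc2 => by
      have hcz : c ∈ z := List.mem_reverse.mp hc1
      rcases List.mem_append.mp hc2 with h | h
      · exact dzu c hcz (List.mem_reverse.mp h)
      · simp only [List.mem_cons] at h
        rcases h with rfl | rfl | h
        · exact hbz hcz
        · exact hbz hcz
        · exact dxz c (List.mem_reverse.mp h) hcz)
  rw [phi]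
  rw [pushAll x _ [] (by rw [List.append_nil]; exact noABA_rev hxno), List.append_nil]
  rw [pushAll (b :: u) _ x.reverse (by rw [List.reverse_cons]; exact h2), List.reverse_cons]
  rw [pushAll y _ ((u.reverse ++ [b]) ++ x.reverse) h3]
  rw [show y.reverse ++ (u.reverse ++ [b] ++ x.reverse)
    = (y.reverse ++ u.reverse) ++ (b :: x.reverse) by simp]
  rw [show (b :: u) ++ z = b :: (u ++ z) from rfl]
  rw [popToB (y.reverse ++ u.reverse) (u ++ z) x.reverse (by
    intro h
    rcases List.mem_append.mp h with h' | h'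
    · exact hby (List.mem_reverse.mp h')
    · exact hbu (List.mem_reverse.mp h'))]
  rw [phiAux_push _ hbb]
  rw [pushAll u z (b :: b :: x.reverse) h6]
  rw [show z = z ++ [] by simp, pushAll z [] (u.reverse ++ (b :: b :: x.reverse)) (by
    simpa using h7)]
  simp [phiAux_nil]

def GoodP (n t : ℕ) (p : List ℕ) : Prop :=
  ∃ X v Y Z : List ℕ, p = X ++ (v ++ (Y ++ (v ++ Z))) ∧ v.Nodup ∧ v.length = n - t ∧
    ¬ HasABA X ∧ ¬ HasABA Y ∧ ¬ HasABA Z ∧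
    (∀ c, c ∈ X → c ∈ v → False) ∧ (∀ c, c ∈ X → c ∈ Y → False) ∧
    (∀ c, c ∈ X → c ∈ Z → False) ∧ (∀ c, c ∈ v → c ∈ Y → False) ∧
    (∀ c, c ∈ v → c ∈ Z → False) ∧ (∀ c, c ∈ Y → c ∈ Z → False) ∧
    (1 ≤ t → Z ≠ []) ∧ (2 ≤ t → Y ≠ [])

lemma goodP_step {n t : ℕ} {p : List ℕ} (hg : GoodP n t p) (ht : t + 1 ≤ n) :
    GoodP n (t + 1) (phi p) := by
  obtain ⟨X, v, Y, Z, hp, hnd, hlen, hX, hY, hZ, dXv, dXY, dXZ, dvY, dvZ, dYZ, hZne, hYne⟩ := hg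
  match v, hlen, hnd with
  | [], hlen, _ => simp at hlen; omega
  | b :: u, hlen, hnd =>
    have hbu : b ∉ u := (List.nodup_cons.mp hnd).1
    have hund : u.Nodup := (List.nodup_cons.mp hnd).2
    have hbv : b ∈ b :: u := List.mem_cons_self (a := b) (l := u)
    have key := lemClass (b := b) (x := X) (u := u) (y := Y) (z := Z)
      hX hY hZ (noABA_of_nodup hund)
      dXY dXZ (fun c h1 h2 => dXv c h1 (List.mem_cons_of_mem b h2))
      dYZ (fun c h1 h2 => dvY c (List.mem_cons_of_mem b h2) h1)
      (fun c h1 h2 => dvZ c (List.mem_cons_of_mem b h2) h1)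
      (fun h => dXv b h hbv) (fun h => dvY b hbv h) (fun h => dvZ b hbv h) hbu
    rw [hp, key]
    refine ⟨Y.reverse, u.reverse, Z.reverse, b :: b :: X.reverse, by simp, by simpa using hund,
      ?_, noABA_rev hY, noABA_rev hZ, ?_, ?_, ?_, ?_, ?_, ?_, ?_, by simp, ?_⟩
    · simp only [List.length_reverse]
      simp only [List.length_cons] at hlen
      omega
    · -- ¬ HasABA (b :: b :: X.reverse)
      have : ¬ HasABA ([b, b] ++ X.reverse) :=
        noABA_append_disjoint (hasABA_single (fun c hc => by
          simp only [List.mem_cons, List.not_mem_nil, or_false] at hc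
          tauto)) (noABA_rev hX)
          (fun c hc1 hc2 => by
            simp only [List.mem_cons, List.not_mem_nil, or_false] at hc1
            rcases hc1 with rfl | rfl <;> exact dXv c (List.mem_reverse.mp hc2) hbv)
      simpa using this
    · intro c h1 h2
      exact dvY c (List.mem_cons_of_mem b (List.mem_reverse.mp h2)) (List.mem_reverse.mp h1)
    · intro c h1 h2
      exact dYZ c (List.mem_reverse.mp h1) (List.mem_reverse.mp h2)
    · intro c h1 h2
      simp only [List.mem_cons] at h2
      have hcY := List.mem_reverse.mp h1
      rcases h2 with rfl | rfl | h
      · exact dvY c hbv hcY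
      · exact dvY c hbv hcY
      · exact dXY c (List.mem_reverse.mp h) hcY
    · intro c h1 h2
      exact dvZ c (List.mem_cons_of_mem b (List.mem_reverse.mp h1)) (List.mem_reverse.mp h2)
    · intro c h1 h2
      simp only [List.mem_cons] at h2
      have hcu := List.mem_reverse.mp h1
      rcases h2 with rfl | rfl | h
      · exact hbu hcu
      · exact hbu hcu
      · exact dXv c (List.mem_reverse.mp h) (List.mem_cons_of_mem b hcu)
    · intro c h1 h2
      simp only [List.mem_cons] at h2
      have hcZ := List.mem_reverse.mp h1
      rcases h2 with rfl | rfl | h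
      · exact dvZ c hbv hcZ
      · exact dvZ c hbv hcZ
      · exact dXZ c (List.mem_reverse.mp h) hcZ
    · intro h2
      simp only [ne_eq, List.reverse_eq_nil_iff]
      exact hZne (by omega)

lemma goodP_iterate {n : ℕ} {w : List ℕ} (hnd : w.Nodup) (hlen : w.length = n) :
    ∀ t, t ≤ n → GoodP n t (phi^[t] (w ++ w)) := by
  intro t
  induction t with
  | zero =>
    intro _
    refine ⟨[], w, [], [], by simp, hnd, by simp [hlen], ?_, ?_, ?_, ?_, ?_, ?_, ?_, ?_, ?_,
      by omega, by omega⟩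
    all_goals first
      | exact fun h => by simpa using hasABA_len h
      | exact fun c h1 h2 => by simp at h1
      | exact fun c h1 h2 => by simp at h2
  | succ t ih =>
    intro ht
    rw [Function.iterate_succ_apply']
    exact goodP_step (ih (by omega)) ht

/-- N(p) applications of φ_{aba} always sort p, and for each n ≥ 3 this bound is
attained by p = (a₁⋯aₙ)², which needs exactly n applications. -/
theorem stmt19 :
    (∀ p : List ℕ, SortedWord (phi^[Nletters p] p)) ∧
    (∀ n : ℕ, 3 ≤ n → ∀ w : List ℕ, w.Nodup → w.length = n →
      Nletters (w ++ w) = n ∧ SortedWord (phi^[n] (w ++ w)) ∧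
        ¬ SortedWord (phi^[n - 1] (w ++ w))) := by
  have part1 : ∀ p : List ℕ, SortedWord (phi^[Nletters p] p) := by
    intro p
    exact part1_aux (Nletters p) p (nc_le_card p)
  refine ⟨part1, ?_⟩
  intro n hn w hnd hlen
  have hNl : Nletters (w ++ w) = n := by
    unfold Nletters
    rw [List.toFinset_append, Finset.union_self, List.toFinset_card_of_nodup hnd, hlen]
  refine ⟨hNl, by rw [← hNl]; exact part1 (w ++ w), ?_⟩
  obtain ⟨X, v, Y, Z, hp, hvnd, hvlen, hX, hY, hZ, dXv, dXY, dXZ, dvY, dvZ, dYZ, hZne, hYne⟩ :=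
    goodP_iterate hnd hlen (n - 1) (by omega)
  have hv1 : v.length = 1 := by omega
  obtain ⟨b, rfl⟩ := List.length_eq_one_iff.mp hv1
  have hYne' : Y ≠ [] := hYne (by omega)
  obtain ⟨y0, Y', rfl⟩ := List.exists_cons_of_ne_nil hYne'
  intro hsort
  rw [sortedWord_iff] at hsort
  apply hsort
  rw [hp, hasABA_iff]
  refine ⟨b, y0, fun h => dvY b (by simp) (h ▸ List.mem_cons_self (a := y0) (l := Y')), ?_⟩
  refine List.Sublist.trans ?_ (List.sublist_append_right X _)
  refine List.Sublist.cons₂ b ?_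
  have h1 : [y0] <+ y0 :: Y' := List.singleton_sublist.mpr (List.mem_cons_self (a := y0) (l := Y'))
  have h2 : [b] <+ [b] ++ Z := List.sublist_append_left [b] Z
  exact h1.append h2
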